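/- For s, t ≥ 2, the set F = {(1,1), (s,1), (1,t), (s,t)} of the four corners is a frame for the (s × t)-grid: every endomorphism h of G_{s,t} whose image contains F is surjective. -/

import Mathlib

/-- Vertices of the `(s × t)`-grid: pairs `(i, j)` with `i ∈ [s]`, `j ∈ [t]`. -/
def GridV (s t : ℕ) : Type :=
  {p : ℕ × ℕ // 1 ≤ p.1 ∧ p.1 ≤ s ∧ 1 ≤ p.2 ∧ p.2 ≤ t}

/-- The `(s × t)`-grid graph: `(i,j)` and `(i',j')` are adjacent iff
`|i - i'| + |j - j'| = 1`. -/
def gridGraph (s t : ℕ) : SimpleGraph (GridV s t) :=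
  SimpleGraph.fromRel (fun p q =>
    ((p.1.1 : ℤ) - q.1.1).natAbs + ((p.1.2 : ℤ) - q.1.2).natAbs = 1)

/-- L1 distance between grid vertices. -/
def gridD {s t : ℕ} (u v : GridV s t) : ℕ :=
  ((u.1.1 : ℤ) - v.1.1).natAbs + ((u.1.2 : ℤ) - v.1.2).natAbs

lemma grid_adj_iff {s t : ℕ} {u v : GridV s t} :
    (gridGraph s t).Adj u v ↔ gridD u v = 1 := by
  unfold gridGraph gridD
  rw [SimpleGraph.fromRel_adj]
  constructor
  · rintro ⟨hne, hr | hr⟩ <;> omega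
  · intro hd
    refine ⟨fun he => ?_, Or.inl hd⟩
    rw [he] at hd
    omega

lemma grid_ext {s t : ℕ} {u v : GridV s t}
    (h1 : u.1.1 = v.1.1) (h2 : u.1.2 = v.1.2) : u = v :=
  Subtype.ext (Prod.ext h1 h2)

lemma grid_lip {s t : ℕ} (h : gridGraph s t →g gridGraph s t) :
    ∀ n (u v : GridV s t), gridD u v ≤ n → gridD (h u) (h v) ≤ n := by
  intro n
  induction n with
  | zero =>
    intro u v huv
    have h1 : u.1.1 = v.1.1 := by unfold gridD at huv; omega
    have h2 : u.1.2 = v.1.2 := by unfold gridD at huv; omega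
    rw [grid_ext h1 h2]
    unfold gridD; omega
  | succ n ih =>
    intro u v huv
    by_cases he : gridD u v ≤ n
    · exact (ih u v he).trans (Nat.le_succ n)
    · have hD : gridD u v = n + 1 := by omega
      obtain ⟨⟨u1, u2⟩, hub⟩ := u
      obtain ⟨⟨v1, v2⟩, hvb⟩ := v
      unfold gridD at hD
      simp only at hD hub hvb
      have hw : ∃ w : GridV s t, gridD ⟨(u1, u2), hub⟩ w = 1 ∧ gridD w ⟨(v1, v2), hvb⟩ ≤ n := by
        rcases Nat.lt_or_ge u1 v1 with hc | hc
        · exact ⟨⟨(u1 + 1, u2), by omega⟩, by unfold gridD; simp <;> omega,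
            by unfold gridD; simp <;> omega⟩
        rcases Nat.lt_or_ge v1 u1 with hc2 | hc2
        · exact ⟨⟨(u1 - 1, u2), by omega⟩, by unfold gridD; simp <;> omega,
            by unfold gridD; simp <;> omega⟩
        rcases Nat.lt_or_ge u2 v2 with hc3 | hc3
        · exact ⟨⟨(u1, u2 + 1), by omega⟩, by unfold gridD; simp <;> omega,
            by unfold gridD; simp <;> omega⟩
        · exact ⟨⟨(u1, u2 - 1), by omega⟩, by unfold gridD; simp <;> omega,
            by unfold gridD; simp <;> omega⟩
      obtain ⟨w, hw1, hw2⟩ := hw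
      have hadj : (gridGraph s t).Adj ⟨(u1, u2), hub⟩ w := by
        exact grid_adj_iff.mpr hw1
      have h1 : gridD (h ⟨(u1, u2), hub⟩) (h w) = 1 := grid_adj_iff.mp (h.map_adj hadj)
      have h3 := ih w ⟨(v1, v2), hvb⟩ hw2
      unfold gridD at h1 h3 ⊢
      omega

instance {s t : ℕ} : Finite (GridV s t) := by
  apply Finite.of_injective
    (fun v : GridV s t => ((⟨v.1.1, Nat.lt_succ_of_le v.2.2.1⟩ : Fin (s+1)), (⟨v.1.2, Nat.lt_succ_of_le v.2.2.2.2⟩ : Fin (t+1))))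
  intro u v huv
  simp only [Prod.mk.injEq, Fin.mk.injEq] at huv
  exact grid_ext huv.1 huv.2

set_option maxHeartbeats 1000000 in
/-- The four corners form a frame for the `(s × t)`-grid (`s, t ≥ 2`): every
endomorphism whose image contains the four corners is surjective. -/
theorem grid_corners_frame (s t : ℕ) (hs : 2 ≤ s) (ht : 2 ≤ t)
    (h : gridGraph s t →g gridGraph s t)
    (hF : ({⟨(1, 1), by omega⟩, ⟨(s, 1), by omega⟩, ⟨(1, t), by omega⟩,
            ⟨(s, t), by omega⟩} : Set (GridV s t)) ⊆ Set.range h) :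
    Function.Surjective h := by
  have hlip : ∀ u v : GridV s t, gridD (h u) (h v) ≤ gridD u v :=
    fun u v => grid_lip h (gridD u v) u v le_rfl
  -- preimages of the four corners
  obtain ⟨a, ha⟩ : (⟨(1, 1), by omega⟩ : GridV s t) ∈ Set.range h := hF (Or.inl rfl)
  obtain ⟨b, hb⟩ : (⟨(s, 1), by omega⟩ : GridV s t) ∈ Set.range h := hF (Or.inr (Or.inl rfl))
  obtain ⟨c, hc⟩ : (⟨(1, t), by omega⟩ : GridV s t) ∈ Set.range h := hF (Or.inr (Or.inr (Or.inl rfl)))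
  obtain ⟨d, hd⟩ : (⟨(s, t), by omega⟩ : GridV s t) ∈ Set.range h := hF (Or.inr (Or.inr (Or.inr rfl)))
  have hab := a.2; have hbb := b.2; have hcb := c.2; have hdb := d.2
  -- a and d are opposite corners
  have f_ad : (a.1.1 = 1 ∧ d.1.1 = s ∨ a.1.1 = s ∧ d.1.1 = 1) ∧
      (a.1.2 = 1 ∧ d.1.2 = t ∨ a.1.2 = t ∧ d.1.2 = 1) := by
    have := hlip a d
    rw [ha, hd] at this
    unfold gridD at this
    simp only at this
    omega
  have f_bc : (b.1.1 = s ∧ c.1.1 = 1 ∨ b.1.1 = 1 ∧ c.1.1 = s) ∧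
      (b.1.2 = 1 ∧ c.1.2 = t ∨ b.1.2 = t ∧ c.1.2 = 1) := by
    have := hlip b c
    rw [hb, hc] at this
    unfold gridD at this
    simp only at this
    omega
  -- key distance equalities
  have key : ∀ v : GridV s t,
      gridD (h v) ⟨(1, 1), by omega⟩ = gridD v a ∧
      gridD (h v) ⟨(1, t), by omega⟩ = gridD v c := by
    intro v
    have hvb := v.2
    have hhb := (h v).2
    constructor
    · have l1 := hlip v a; rw [ha] at l1
      have l2 := hlip v d; rw [hd] at l2
      unfold gridD at l1 l2 ⊢
      simp only at l1 l2 ⊢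
      rcases f_ad.1 with ⟨q1, q2⟩ | ⟨q1, q2⟩ <;> rcases f_ad.2 with ⟨q3, q4⟩ | ⟨q3, q4⟩ <;>
        omega
    · have l3 := hlip v b; rw [hb] at l3
      have l4 := hlip v c; rw [hc] at l4
      unfold gridD at l3 l4 ⊢
      simp only at l3 l4 ⊢
      rcases f_bc.1 with ⟨q1, q2⟩ | ⟨q1, q2⟩ <;> rcases f_bc.2 with ⟨q3, q4⟩ | ⟨q3, q4⟩ <;>
        omega
  -- injectivity
  have hinj : Function.Injective h := by
    intro u v huv
    have e_a : gridD u a = gridD v a := by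
      rw [← (key u).1, ← (key v).1, huv]
    have e_c : gridD u c = gridD v c := by
      rw [← (key u).2, ← (key v).2, huv]
    have hac : a.1.1 ≠ c.1.1 ∨ a.1.2 ≠ c.1.2 := by
      by_contra hcon
      push_neg at hcon
      have hacv : a = c := grid_ext hcon.1 hcon.2
      have e2 : ((1, 1) : ℕ × ℕ) = (1, t) :=
        congrArg Subtype.val (ha.symm.trans ((congrArg h hacv).trans hc))
      have e3 : (1 : ℕ) = t := congrArg Prod.snd e2
      omega
    have hdc : d.1.1 ≠ c.1.1 ∨ d.1.2 ≠ c.1.2 := by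
      by_contra hcon
      push_neg at hcon
      have hdcv : d = c := grid_ext hcon.1 hcon.2
      have e2 : ((s, t) : ℕ × ℕ) = (1, t) :=
        congrArg Subtype.val (hd.symm.trans ((congrArg h hdcv).trans hc))
      have e3 : s = 1 := congrArg Prod.fst e2
      omega
    have hub := u.2; have hvb2 := v.2
    unfold gridD at e_a e_c
    obtain ⟨fad1, fad2⟩ := f_ad
    obtain ⟨fbc1, fbc2⟩ := f_bc
    clear key hF hlip ha hb hc hd huv hab hbb hcb hdb
    have hcomp : u.1.1 = v.1.1 ∧ u.1.2 = v.1.2 := by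
      rcases fad1 with ⟨q1, q2⟩ | ⟨q1, q2⟩ <;> rcases fad2 with ⟨q3, q4⟩ | ⟨q3, q4⟩ <;>
        rcases fbc1 with ⟨q5, q6⟩ | ⟨q5, q6⟩ <;> rcases fbc2 with ⟨q7, q8⟩ | ⟨q7, q8⟩ <;>
        omega
    exact grid_ext hcomp.1 hcomp.2
  exact Finite.injective_iff_surjective.mp hinj
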